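/- Let α ≥ 1 and β > 1 be real numbers, and let s₁ ≥ t₁ > 0 and s₂ ≥ t₂ > 0 be reals. Then (s₁^α + s₂^α)^β + (t₁^α + t₂^α)^β ≥ (s₂^α + t₁^α)^β + (s₁^α + t₂^α)^β, with strict inequality when s₁ > t₁ and s₂ > t₂. -/

import Mathlib

private lemma key_strict (β : ℝ) (hβ : 1 < β) {a b c d : ℝ}
    (hc : 0 < c) (hca : c < a) (hd : 0 < d) (hdb : d < b) :
    (a + b) ^ β + (c + d) ^ β > (b + c) ^ β + (a + d) ^ β := by
  set g : ℝ → ℝ := fun u => (u + b) ^ β - (u + d) ^ β with hg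
  have hmono : StrictMonoOn g (Set.Ici (0 : ℝ)) := by
    apply strictMonoOn_of_deriv_pos (convex_Ici 0)
    · apply ContinuousOn.sub
      · exact ((continuous_id.add continuous_const).continuousOn).rpow_const
          (fun x hx => Or.inl (ne_of_gt (by simp only [Set.mem_Ici] at hx; simp only [Pi.add_apply, id_eq]; nlinarith)))
      · exact ((continuous_id.add continuous_const).continuousOn).rpow_const
          (fun x hx => Or.inl (ne_of_gt (by simp only [Set.mem_Ici] at hx; simp only [Pi.add_apply, id_eq]; nlinarith)))
    · intro x hx
      rw [interior_Ici] at hx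
      have hx0 : 0 < x := hx
      have hb' : (0:ℝ) < x + b := by linarith
      have hd' : (0:ℝ) < x + d := by linarith
      have h1 : HasDerivAt (fun u : ℝ => (u + b) ^ β) (β * (x + b) ^ (β - 1) * 1) x := by
        exact (Real.hasDerivAt_rpow_const (Or.inl hb'.ne')).comp x
          ((hasDerivAt_id x).add_const b)
      have h2 : HasDerivAt (fun u : ℝ => (u + d) ^ β) (β * (x + d) ^ (β - 1) * 1) x := by
        exact (Real.hasDerivAt_rpow_const (Or.inl hd'.ne')).comp x
          ((hasDerivAt_id x).add_const d)
      have : HasDerivAt g (β * (x + b) ^ (β - 1) * 1 - β * (x + d) ^ (β - 1) * 1) x :=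
        h1.sub h2
      rw [this.deriv]
      have hlt : (x + d) ^ (β - 1) < (x + b) ^ (β - 1) :=
        Real.rpow_lt_rpow hd'.le (by linarith) (by linarith)
      nlinarith
  have := hmono (Set.mem_Ici.mpr hc.le) (Set.mem_Ici.mpr (hc.trans hca).le) hca
  simp only [hg] at this
  rw [add_comm c b] at this
  linarith

private lemma key_le (β : ℝ) (hβ : 1 < β) {a b c d : ℝ}
    (hc : 0 < c) (hca : c ≤ a) (hd : 0 < d) (hdb : d ≤ b) :
    (a + b) ^ β + (c + d) ^ β ≥ (b + c) ^ β + (a + d) ^ β := by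
  rcases hca.eq_or_lt with rfl | hca
  · rw [add_comm b c]
  rcases hdb.eq_or_lt with rfl | hdb
  · rw [add_comm d c]; linarith
  · exact (key_strict β hβ hc hca hd hdb).le

theorem stmt_11 (α β s₁ s₂ t₁ t₂ : ℝ) (hα : 1 ≤ α) (hβ : 1 < β)
    (ht₁ : 0 < t₁) (h₁ : t₁ ≤ s₁) (ht₂ : 0 < t₂) (h₂ : t₂ ≤ s₂) :
    (s₁ ^ α + s₂ ^ α) ^ β + (t₁ ^ α + t₂ ^ α) ^ β ≥
        (s₂ ^ α + t₁ ^ α) ^ β + (s₁ ^ α + t₂ ^ α) ^ β ∧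
      (t₁ < s₁ → t₂ < s₂ →
        (s₁ ^ α + s₂ ^ α) ^ β + (t₁ ^ α + t₂ ^ α) ^ β >
          (s₂ ^ α + t₁ ^ α) ^ β + (s₁ ^ α + t₂ ^ α) ^ β) := by
  have hα0 : 0 < α := by linarith
  have hc : 0 < t₁ ^ α := Real.rpow_pos_of_pos ht₁ α
  have hd : 0 < t₂ ^ α := Real.rpow_pos_of_pos ht₂ α
  have hca : t₁ ^ α ≤ s₁ ^ α := Real.rpow_le_rpow ht₁.le h₁ hα0.le
  have hdb : t₂ ^ α ≤ s₂ ^ α := Real.rpow_le_rpow ht₂.le h₂ hα0.le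
  constructor
  · exact key_le β hβ hc hca hd hdb
  · intro hs₁ hs₂
    exact key_strict β hβ hc (Real.rpow_lt_rpow ht₁.le hs₁ hα0) hd
      (Real.rpow_lt_rpow ht₂.le hs₂ hα0)
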